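/- For every real η > 0 and every even integer T ≥ 2, Σ_{t=1}^{T/2} e^{(t−1)η}/(e^{(t−1)η} + 1) + Σ_{t=T/2+1}^{T} e^{(t−1−T/2)η}/( e^{(t−1−T/2)η} + e^{(T/2−1)η} ) ≤ (3/4)·T, and consequently T minus this sum is at least T/4. -/
import Mathlib


/-- Computational core of the paper's Proposition 9 (Appendix C): on the lower-bound
instance, the cumulated reward of negative-entropy OMA is at most `(3/4)·T`, hence the
dynamic regret `T` minus this reward is at least `T/4`. -/
theorem oma_negative_entropy_linear_dynamic_regret
    (η : ℝ) (hη : 0 < η) (T : ℕ) (hTeven : Even T) (hT2 : 2 ≤ T) :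
    ((∑ t ∈ Finset.range (T / 2),
        Real.exp ((t : ℝ) * η) / (Real.exp ((t : ℝ) * η) + 1))
      + ∑ t ∈ Finset.range (T / 2),
        Real.exp ((t : ℝ) * η) / (Real.exp ((t : ℝ) * η) + Real.exp (((T / 2 - 1 : ℕ) : ℝ) * η))
      ≤ (3 / 4) * (T : ℝ))
    ∧ ((T : ℝ) / 4 ≤ (T : ℝ)
        - ((∑ t ∈ Finset.range (T / 2),
              Real.exp ((t : ℝ) * η) / (Real.exp ((t : ℝ) * η) + 1))
          + ∑ t ∈ Finset.range (T / 2),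
              Real.exp ((t : ℝ) * η) / (Real.exp ((t : ℝ) * η) + Real.exp (((T / 2 - 1 : ℕ) : ℝ) * η)))) := by
  have hTcast : ((T / 2 : ℕ) : ℝ) = (T : ℝ) / 2 := by
    obtain ⟨k, hk⟩ := hTeven
    subst hk
    have h : (k + k) / 2 = k := by omega
    rw [h]; push_cast; ring
  have h1 : (∑ t ∈ Finset.range (T / 2),
      Real.exp ((t : ℝ) * η) / (Real.exp ((t : ℝ) * η) + 1)) ≤ (T / 2 : ℕ) * 1 := by
    have := Finset.sum_le_card_nsmul (Finset.range (T/2))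
      (fun t => Real.exp ((t : ℝ) * η) / (Real.exp ((t : ℝ) * η) + 1)) 1 ?_
    · simpa using this
    intro t _
    have he : (0:ℝ) < Real.exp ((t : ℝ) * η) := Real.exp_pos _
    rw [div_le_one (by linarith)]
    linarith
  have h2 : (∑ t ∈ Finset.range (T / 2),
      Real.exp ((t : ℝ) * η) / (Real.exp ((t : ℝ) * η) + Real.exp (((T / 2 - 1 : ℕ) : ℝ) * η)))
      ≤ (T / 2 : ℕ) * (1/2) := by
    have := Finset.sum_le_card_nsmul (Finset.range (T/2))
      (fun t => Real.exp ((t : ℝ) * η) / (Real.exp ((t : ℝ) * η) + Real.exp (((T / 2 - 1 : ℕ) : ℝ) * η))) (1/2) ?_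
    · simpa [nsmul_eq_mul] using this
    intro t ht
    have ht' : t ≤ T / 2 - 1 := by
      have := Finset.mem_range.mp ht; omega
    have he : (0:ℝ) < Real.exp ((t : ℝ) * η) := Real.exp_pos _
    have hle : Real.exp ((t : ℝ) * η) ≤ Real.exp (((T / 2 - 1 : ℕ) : ℝ) * η) := by
      apply Real.exp_le_exp.mpr
      apply mul_le_mul_of_nonneg_right _ hη.le
      exact_mod_cast ht'
    rw [div_le_iff₀ (by linarith [Real.exp_pos (((T / 2 - 1 : ℕ) : ℝ) * η)])]
    linarith
  rw [hTcast] at h1 h2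
  constructor <;> [skip; skip] <;>
  · have hT : (2:ℝ) ≤ (T:ℝ) := by exact_mod_cast hT2
    linarith
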